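/- Flett-type mean value theorem for a weighted Volterra operator: Let a < b, let f : ℝ → ℝ be continuous on [a, b] with ∫_a^b f(x) dx = 0, and let g : ℝ → ℝ be continuously differentiable on [a, b] with g'(x) ≠ 0 for all x ∈ [a, b]. Then there exists ξ ∈ (a, b) such that ∫_a^ξ f(x) g(x) dx = g(a) * ∫_a^ξ f(x) dx. -/

import Mathlib

open Set intervalIntegral Filter Topology

private lemma ftc_deriv (f : ℝ → ℝ) (hf : Continuous f) (a t : ℝ) :
    HasDerivAt (fun u => ∫ x in a..u, f x) (f t) t :=
  intervalIntegral.integral_hasDerivAt_right (hf.intervalIntegrable a t)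
    hf.stronglyMeasurable.stronglyMeasurableAtFilter hf.continuousAt

private lemma core_false (f g g' : ℝ → ℝ) (a b : ℝ) (hab : a < b)
    (hf : Continuous f)
    (hg : ∀ x, HasDerivAt g (g' x) x) (hg'c : Continuous g')
    (hg'pos : ∀ x ∈ Set.Icc a b, 0 < g' x)
    (hfint : (∫ x in a..b, f x) = 0)
    (hΦ : ∀ t ∈ Set.Ioo a b, 0 < ∫ x in a..t, f x * (g x - g a)) : False := by
  have hgc : Continuous g := continuous_iff_continuousAt.2 fun x => (hg x).continuousAt
  set F : ℝ → ℝ := fun t => ∫ x in a..t, f x with hFdef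
  have hF : ∀ t, HasDerivAt F (f t) t := ftc_deriv f hf a
  have hFc : Continuous F := continuous_iff_continuousAt.2 fun x => (hF x).continuousAt
  set Φ : ℝ → ℝ := fun t => ∫ x in a..t, f x * (g x - g a) with hΦdef
  have hfg : Continuous fun x => f x * (g x - g a) := hf.mul (hgc.sub continuous_const)
  have hΦd : ∀ t, HasDerivAt Φ (f t * (g t - g a)) t := ftc_deriv _ hfg a
  have hΦc : Continuous Φ := continuous_iff_continuousAt.2 fun x => (hΦd x).continuousAt
  set ψ : ℝ → ℝ := fun t => ∫ x in a..t, F x * g' x with hψdef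
  have hFg' : Continuous fun x => F x * g' x := hFc.mul hg'c
  have hψd : ∀ t, HasDerivAt ψ (F t * g' t) t := ftc_deriv _ hFg' a
  have hψc : Continuous ψ := continuous_iff_continuousAt.2 fun x => (hψd x).continuousAt
  have hFa : F a = 0 := intervalIntegral.integral_same
  have hFb : F b = 0 := hfint
  have hΦa : Φ a = 0 := intervalIntegral.integral_same
  have hψa : ψ a = 0 := intervalIntegral.integral_same
  -- the key integration-by-parts identity
  have key : ∀ t, Φ t = F t * (g t - g a) - ψ t := by
    have hD : ∀ t, HasDerivAt (fun t => F t * (g t - g a) - ψ t - Φ t) 0 t := by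
      intro t
      have h1 : HasDerivAt (fun t => F t * (g t - g a)) (f t * (g t - g a) + F t * g' t) t :=
        (hF t).mul ((hg t).sub_const (g a))
      have h2 := ((h1.sub (hψd t)).sub (hΦd t))
      exact h2.congr_deriv (by ring)
    have hconst := is_const_of_deriv_eq_zero (fun t => (hD t).differentiableAt)
      (fun t => (hD t).deriv)
    intro t
    have := hconst t a
    simp only [hFa, hψa, hΦa, zero_mul, sub_zero, sub_self, zero_sub] at this
    linarith [this]
  -- g is strictly monotone on [a,b]
  have hgmono : StrictMonoOn g (Set.Icc a b) := by
    apply strictMonoOn_of_deriv_pos (convex_Icc a b) hgc.continuousOn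
    intro x hx
    rw [interior_Icc] at hx
    rw [(hg x).deriv]
    exact hg'pos x (Set.mem_Icc_of_Ioo hx)
  have hgpos : ∀ t ∈ Set.Ioc a b, 0 < g t - g a := fun t ht =>
    sub_pos.2 (hgmono (Set.left_mem_Icc.2 hab.le) ⟨ht.1.le, ht.2⟩ ht.1)
  -- k = ψ / (g - g a)
  set k : ℝ → ℝ := fun t => ψ t / (g t - g a) with hkdef
  -- k is strictly monotone on Ioc a b
  have hkmono : StrictMonoOn k (Set.Ioc a b) := by
    apply strictMonoOn_of_deriv_pos (convex_Ioc a b)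
    · exact ContinuousOn.div hψc.continuousOn (hgc.sub continuous_const).continuousOn
        (fun t ht => (hgpos t ht).ne')
    · intro t ht
      rw [interior_Ioc] at ht
      have hne : g t - g a ≠ 0 := (hgpos t (Set.mem_Ioc_of_Ioo ht)).ne'
      have hd : HasDerivAt k ((F t * g' t * (g t - g a) - ψ t * g' t) / (g t - g a) ^ 2) t := by
        have := (hψd t).div ((hg t).sub_const (g a)) hne
        exact this
      rw [hd.deriv]
      have hnum : F t * g' t * (g t - g a) - ψ t * g' t = g' t * Φ t := by
        rw [key t]; ring
      rw [hnum]
      apply div_pos (mul_pos (hg'pos t (Set.mem_Icc_of_Ioo ht)) (hΦ t ht))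
      positivity
  -- k b ≤ 0
  have hΦb : 0 ≤ Φ b := by
    have : Filter.Tendsto Φ (𝓝[<] b) (𝓝 (Φ b)) :=
      (hΦc.tendsto b).mono_left nhdsWithin_le_nhds
    refine ge_of_tendsto this ?_
    filter_upwards [Ioo_mem_nhdsLT_of_mem ⟨hab, le_refl b⟩] with t ht
    exact (hΦ t ht).le
  have hψb : ψ b ≤ 0 := by
    have := key b
    rw [hFb, zero_mul, zero_sub] at this
    linarith
  have hkb : k b ≤ 0 :=
    div_nonpos_iff.2 (Or.inr ⟨hψb, (hgpos b (Set.right_mem_Ioc.2 hab)).le⟩)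
  -- k tends to 0 at a from the right
  have hklim : Filter.Tendsto k (𝓝[>] a) (𝓝 0) := by
    apply HasDerivAt.lhopital_zero_nhdsGT
      (f' := fun t => F t * g' t) (g' := fun t => g' t)
    · exact Filter.Eventually.of_forall hψd
    · exact Filter.Eventually.of_forall fun t => (hg t).sub_const (g a)
    · have : ∀ᶠ t in 𝓝 a, g' t ≠ 0 := by
        have := hg'c.continuousAt (x := a)
        exact this.eventually_ne (hg'pos a (Set.left_mem_Icc.2 hab.le)).ne'
      exact this.filter_mono nhdsWithin_le_nhds
    · have : Filter.Tendsto ψ (𝓝 a) (𝓝 (ψ a)) := hψc.tendsto a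
      rw [hψa] at this
      exact this.mono_left nhdsWithin_le_nhds
    · have : Filter.Tendsto (fun t => g t - g a) (𝓝 a) (𝓝 (g a - g a)) :=
        (hgc.tendsto a).sub tendsto_const_nhds
      rw [sub_self] at this
      exact this.mono_left nhdsWithin_le_nhds
    · have h1 : ∀ᶠ t in 𝓝[>] a, F t * g' t / g' t = F t := by
        have : ∀ᶠ t in 𝓝 a, g' t ≠ 0 :=
          (hg'c.continuousAt (x := a)).eventually_ne (hg'pos a (Set.left_mem_Icc.2 hab.le)).ne'
        filter_upwards [this.filter_mono nhdsWithin_le_nhds] with t ht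
        field_simp
      rw [Filter.tendsto_congr' h1]
      have : Filter.Tendsto F (𝓝 a) (𝓝 (F a)) := hFc.tendsto a
      rw [hFa] at this
      exact this.mono_left nhdsWithin_le_nhds
  -- contradiction
  set t₀ : ℝ := (a + b) / 2 with ht₀def
  have ht₀ : t₀ ∈ Set.Ioo a b := ⟨by linarith, by linarith⟩
  have h1 : (0 : ℝ) ≤ k t₀ := by
    refine le_of_tendsto hklim ?_
    filter_upwards [Ioo_mem_nhdsGT_of_mem ⟨le_refl a, ht₀.1⟩] with s hs
    exact (hkmono ⟨hs.1, (hs.2.le.trans ht₀.2.le)⟩ ⟨ht₀.1, ht₀.2.le⟩ hs.2).le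
  have h2 : k t₀ < k b := hkmono ⟨ht₀.1, ht₀.2.le⟩ (Set.right_mem_Ioc.2 hab) ht₀.2
  linarith

private lemma aux_exists (f g g' : ℝ → ℝ) (a b : ℝ) (hab : a < b)
    (hf : Continuous f)
    (hg : ∀ x, HasDerivAt g (g' x) x) (hg'c : Continuous g')
    (hg'pos : ∀ x ∈ Set.Icc a b, 0 < g' x)
    (hfint : (∫ x in a..b, f x) = 0) :
    ∃ ξ ∈ Set.Ioo a b, (∫ x in a..ξ, f x * (g x - g a)) = 0 := by
  by_contra hcon
  push_neg at hcon
  have hgc : Continuous g := continuous_iff_continuousAt.2 fun x => (hg x).continuousAt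
  set Φ : ℝ → ℝ := fun t => ∫ x in a..t, f x * (g x - g a) with hΦdef
  have hfg : Continuous fun x => f x * (g x - g a) := hf.mul (hgc.sub continuous_const)
  have hΦc : Continuous Φ := continuous_iff_continuousAt.2 fun x =>
    ((ftc_deriv _ hfg a) x).continuousAt
  -- Φ has constant sign on Ioo a b
  have hsign : (∀ t ∈ Set.Ioo a b, 0 < Φ t) ∨ (∀ t ∈ Set.Ioo a b, Φ t < 0) := by
    by_contra h
    push_neg at h
    obtain ⟨⟨t₁, ht₁, ht₁'⟩, ⟨t₂, ht₂, ht₂'⟩⟩ := h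
    have h1 : Φ t₁ < 0 := lt_of_le_of_ne ht₁' (hcon t₁ ht₁)
    have h2 : 0 < Φ t₂ := lt_of_le_of_ne ht₂' (Ne.symm (hcon t₂ ht₂))
    have hsub : Set.uIcc t₁ t₂ ⊆ Set.Ioo a b := Set.ordConnected_Ioo.uIcc_subset ht₁ ht₂
    have := intermediate_value_uIcc (hΦc.continuousOn (s := Set.uIcc t₁ t₂))
    have h0 : (0 : ℝ) ∈ Set.uIcc (Φ t₁) (Φ t₂) := Set.mem_uIcc.2 (Or.inl ⟨h1.le, h2.le⟩)
    obtain ⟨c, hc, hc0⟩ := this h0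
    exact hcon c (hsub hc) hc0
  rcases hsign with h | h
  · exact core_false f g g' a b hab hf hg hg'c hg'pos hfint h
  · apply core_false (fun x => -f x) g g' a b hab hf.neg hg hg'c hg'pos
    · rw [intervalIntegral.integral_neg, hfint, neg_zero]
    · intro t ht
      have : (∫ x in a..t, -f x * (g x - g a)) = -Φ t := by
        rw [hΦdef]
        simp only
        rw [← intervalIntegral.integral_neg]
        congr 1; ext x; ring
      rw [this]
      linarith [h t ht]

/-- Flett-type mean value theorem for a weighted Volterra operator. -/
theorem weighted_volterra_flett (f g g' : ℝ → ℝ) (a b : ℝ) (hab : a < b)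
    (hfc : ContinuousOn f (Set.Icc a b))
    (hfint : (∫ x in a..b, f x) = 0)
    (hg : ∀ x ∈ Set.Icc a b, HasDerivWithinAt g (g' x) (Set.Icc a b) x)
    (hg'c : ContinuousOn g' (Set.Icc a b))
    (hg' : ∀ x ∈ Set.Icc a b, g' x ≠ 0) :
    ∃ ξ ∈ Set.Ioo a b, (∫ x in a..ξ, f x * g x) = g a * ∫ x in a..ξ, f x := by
  have hle : a ≤ b := hab.le
  have hgcont : ContinuousOn g (Set.Icc a b) := fun x hx => (hg x hx).continuousWithinAt
  -- continuous extensions of f and g'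
  set fc : ℝ → ℝ := Set.IccExtend hle ((Set.Icc a b).restrict f) with hfcdef
  have hfcC : Continuous fc := Continuous.Icc_extend' hfc.restrict
  have hfceq : ∀ x ∈ Set.Icc a b, fc x = f x := fun x hx => by
    rw [hfcdef, Set.IccExtend_of_mem hle _ hx]; rfl
  set gp : ℝ → ℝ := Set.IccExtend hle ((Set.Icc a b).restrict g') with hgpdef
  have hgpC : Continuous gp := Continuous.Icc_extend' hg'c.restrict
  have hgpeq : ∀ x ∈ Set.Icc a b, gp x = g' x := fun x hx => by
    rw [hgpdef, Set.IccExtend_of_mem hle _ hx]; rfl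
  -- primitive of gp agreeing with g on [a,b]
  set G : ℝ → ℝ := fun t => g a + ∫ x in a..t, gp x with hGdef
  have hGd : ∀ t, HasDerivAt G (gp t) t := fun t => (ftc_deriv gp hgpC a t).const_add (g a)
  have hGC : Continuous G := continuous_iff_continuousAt.2 fun x => (hGd x).continuousAt
  have hGg : ∀ y ∈ Set.Icc a b, G y = g y := by
    apply eq_of_has_deriv_right_eq (f' := fun y => g' y)
    · intro x hx
      have := (hGd x).hasDerivWithinAt (s := Set.Ici x)
      rwa [hgpeq x (Set.mem_Icc_of_Ico hx)] at this
    · intro x hx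
      apply (hg x (Set.mem_Icc_of_Ico hx)).mono_of_mem_nhdsWithin
      rw [mem_nhdsWithin]
      exact ⟨Set.Iio b, isOpen_Iio, hx.2, fun z hz => ⟨hx.1.trans hz.2, hz.1.le⟩⟩
    · exact hGC.continuousOn
    · exact hgcont
    · simp [hGdef]
  have hGa : G a = g a := hGg a (Set.left_mem_Icc.2 hle)
  -- integral of fc over [a,b] vanishes
  have hfcint : (∫ x in a..b, fc x) = 0 := by
    rw [intervalIntegral.integral_congr (g := f) (fun x hx => hfceq x (by rwa [Set.uIcc_of_le hle] at hx))]
    exact hfint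
  -- a helper closing the goal from a zero of the key integral
  have finish : ∀ ξ ∈ Set.Ioo a b, (∫ x in a..ξ, fc x * (G x - G a)) = 0 →
      (∫ x in a..ξ, f x * g x) = g a * ∫ x in a..ξ, f x := by
    intro ξ hξ h0
    have hsub : Set.uIcc a ξ ⊆ Set.Icc a b := by
      rw [Set.uIcc_of_le hξ.1.le]
      exact Set.Icc_subset_Icc le_rfl hξ.2.le
    have h0' : (∫ x in a..ξ, f x * (g x - g a)) = 0 := by
      rw [← h0]
      apply intervalIntegral.integral_congr
      intro x hx
      show f x * (g x - g a) = fc x * (G x - G a)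
      rw [hfceq x (hsub hx), hGg x (hsub hx), hGa]
    have hint1 : IntervalIntegrable (fun x => f x * g x) MeasureTheory.volume a ξ :=
      ((hfc.mono hsub).mul (hgcont.mono hsub)).intervalIntegrable
    have hint2 : IntervalIntegrable (fun x => g a * f x) MeasureTheory.volume a ξ :=
      ((continuousOn_const.mul (hfc.mono hsub))).intervalIntegrable
    have : (∫ x in a..ξ, f x * g x) - g a * ∫ x in a..ξ, f x = 0 := by
      rw [← intervalIntegral.integral_const_mul, ← intervalIntegral.integral_sub hint1 hint2, ← h0']
      apply intervalIntegral.integral_congr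
      intro x _
      ring
    linarith
  -- g' has constant sign on [a,b]
  have habmem : a ∈ Set.Icc a b := Set.left_mem_Icc.2 hle
  rcases (hg' a habmem).lt_or_gt with hneg | hpos
  · -- g' < 0 everywhere on [a,b]
    have hallneg : ∀ x ∈ Set.Icc a b, gp x < 0 := by
      intro x hx
      rw [hgpeq x hx]
      by_contra hge
      push_neg at hge
      have hxpos : 0 < g' x := lt_of_le_of_ne hge (Ne.symm (hg' x hx))
      have hsub : Set.uIcc a x ⊆ Set.Icc a b := Set.ordConnected_Icc.uIcc_subset habmem hx
      have h0 : (0 : ℝ) ∈ Set.uIcc (g' a) (g' x) := Set.mem_uIcc.2 (Or.inl ⟨hneg.le, hxpos.le⟩)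
      obtain ⟨c, hc, hc0⟩ := intermediate_value_uIcc (hg'c.mono hsub) h0
      exact hg' c (hsub hc) hc0
    obtain ⟨ξ, hξ, h0⟩ := aux_exists fc (fun t => -G t) (fun t => -gp t) a b hab hfcC
      (fun t => (hGd t).neg) hgpC.neg
      (fun x hx => by simpa using hallneg x hx) hfcint
    refine ⟨ξ, hξ, finish ξ hξ ?_⟩
    have : (∫ x in a..ξ, fc x * (-G x - -G a)) = -∫ x in a..ξ, fc x * (G x - G a) := by
      rw [← intervalIntegral.integral_neg]
      apply intervalIntegral.integral_congr
      intro x _; ring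
    rw [this] at h0
    linarith
  · -- g' > 0 everywhere on [a,b]
    have hallpos : ∀ x ∈ Set.Icc a b, 0 < gp x := by
      intro x hx
      rw [hgpeq x hx]
      by_contra hge
      push_neg at hge
      have hxneg : g' x < 0 := lt_of_le_of_ne hge (hg' x hx)
      have hsub : Set.uIcc a x ⊆ Set.Icc a b := Set.ordConnected_Icc.uIcc_subset habmem hx
      have h0 : (0 : ℝ) ∈ Set.uIcc (g' a) (g' x) := Set.mem_uIcc.2 (Or.inr ⟨hxneg.le, hpos.le⟩)
      obtain ⟨c, hc, hc0⟩ := intermediate_value_uIcc (hg'c.mono hsub) h0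
      exact hg' c (hsub hc) hc0
    obtain ⟨ξ, hξ, h0⟩ := aux_exists fc G gp a b hab hfcC hGd hgpC hallpos hfcint
    exact ⟨ξ, hξ, finish ξ hξ h0⟩
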